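/- Let (▶, ∼) be an abstract equational rewrite system, where ▶ is a binary relation on a set X and ∼ an equivalence relation on X. If ▶ is confluent and ∼ is a simulation with respect to ▶ (i.e., whenever t ∼ u and u ▶ u', there exists t' with t ▶ t' and t' ∼ u'), then the system is Church-Rosser modulo: x (▶ ∪ ◀ ∪ ∼)* y implies x ▶* z₁ ∼ z₂ ◀* y for some z₁, z₂, where ◀ is the inverse of ▶. -/
import Mathlib

theorem sim_star {X : Type*} (r e : X → X → Prop)
    (hsim : ∀ t u u', e t u → r u u' → ∃ t', r t t' ∧ e t' u')
    {t u u'} (het : e t u) (h : Relation.ReflTransGen r u u') :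
    ∃ t', Relation.ReflTransGen r t t' ∧ e t' u' := by
  induction h with
  | refl => exact ⟨t, .refl, het⟩
  | tail _ hbc ih =>
    obtain ⟨t', ht', he'⟩ := ih
    obtain ⟨t'', ht'', he''⟩ := hsim _ _ _ he' hbc
    exact ⟨t'', ht'.tail ht'', he''⟩

/-- Abstract Church-Rosser modulo: if `r` is confluent and the equivalence `e` is a
simulation with respect to `r`, then the abstract equational rewrite system `(r, e)`
is Church-Rosser modulo. -/
theorem church_rosser_modulo {X : Type*} (r e : X → X → Prop)
    (heq : Equivalence e)
    (hconf : ∀ x y z, Relation.ReflTransGen r x y → Relation.ReflTransGen r x z →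
      ∃ w, Relation.ReflTransGen r y w ∧ Relation.ReflTransGen r z w)
    (hsim : ∀ t u u', e t u → r u u' → ∃ t', r t t' ∧ e t' u')
    (x y : X)
    (h : Relation.ReflTransGen (fun a b => r a b ∨ r b a ∨ e a b) x y) :
    ∃ z₁ z₂, Relation.ReflTransGen r x z₁ ∧ e z₁ z₂ ∧ Relation.ReflTransGen r y z₂ := by
  induction h with
  | refl => exact ⟨x, x, .refl, heq.refl x, .refl⟩
  | @tail b c _ hbc ih =>
    obtain ⟨z₁, z₂, hx, he, hb⟩ := ih
    rcases hbc with hr | hr | hr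
    · obtain ⟨w, hzw, hcw⟩ := hconf b z₂ c hb (.single hr)
      obtain ⟨z₁', hz₁', he'⟩ := sim_star r e hsim he hzw
      exact ⟨z₁', w, hx.trans hz₁', he', hcw⟩
    · exact ⟨z₁, z₂, hx, he, .head hr hb⟩
    · obtain ⟨z₂', hcz, he'⟩ := sim_star r e hsim (heq.symm hr) hb
      exact ⟨z₁, z₂', hx, heq.trans he (heq.symm he'), hcz⟩
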